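/- Fix w with 0 ≤ w ≤ k, suppose each φ_l is differentiable, and regard Φ_w as a function of the single weight matrix V_j (all other weights and σ_a held fixed). If 0 ≤ j ≤ w, then the Fréchet derivative of this map at V_j applied to a direction H ∈ ℝ^{L_j × L_{j+1}} equals ( ∏^{↶}_{l=j+1,…,w} V_lᵀ φ'_l(Φ_{l-1}) ) · ( Hᵀ φ_j ), where φ_0 := σ_a, φ_j := φ_j(Φ_{j-1}) for j ≥ 1, φ'_l is the Jacobian of φ_l, and the arrow denotes the right-to-left ordered product V_wᵀ φ'_w(Φ_{w-1}) ⋯ V_{j+1}ᵀ φ'_{j+1}(Φ_j) (the identity when j = w). If j > w, then Φ_w does not depend on V_j and this derivative is the zero map. -/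

import Mathlib

open scoped Matrix Matrix.Norms.L2Operator

/-- The linear map `x ↦ Aᵀ x` on Euclidean spaces, i.e. the action of the (transposed)
weight matrix `A` as in `Φⱼ = Vⱼᵀ φⱼ(Φⱼ₋₁)`. Its operator norm equals the spectral norm of `A`. -/
noncomputable def matCLM {a b : ℕ} (A : Matrix (Fin a) (Fin b) ℝ) :
    EuclideanSpace ℝ (Fin a) →L[ℝ] EuclideanSpace ℝ (Fin b) :=
  LinearMap.toContinuousLinearMap (Matrix.toEuclideanLin Aᵀ)

/-- The layer outputs of a fully-connected feedforward DNN: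
`Φ₀ = V₀ᵀ σₐ` and `Φⱼ = Vⱼᵀ φⱼ(Φⱼ₋₁)`. -/
noncomputable def dnnPhi (L : ℕ → ℕ)
    (V : (j : ℕ) → Matrix (Fin (L j)) (Fin (L (j+1))) ℝ)
    (σa : EuclideanSpace ℝ (Fin (L 0)))
    (φ : (j : ℕ) → EuclideanSpace ℝ (Fin (L j)) → EuclideanSpace ℝ (Fin (L j))) :
    (j : ℕ) → EuclideanSpace ℝ (Fin (L (j+1)))
  | 0 => matCLM (V 0) σa
  | (j+1) => matCLM (V (j+1)) (φ (j+1) (dnnPhi L V σa φ j))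

/-- `phiVec j` is the shorthand `φⱼ`: `φ₀ = σₐ` and `φⱼ = φⱼ(Φⱼ₋₁)` for `j ≥ 1`. -/
noncomputable def phiVec (L : ℕ → ℕ)
    (V : (j : ℕ) → Matrix (Fin (L j)) (Fin (L (j+1))) ℝ)
    (σa : EuclideanSpace ℝ (Fin (L 0)))
    (φ : (j : ℕ) → EuclideanSpace ℝ (Fin (L j)) → EuclideanSpace ℝ (Fin (L j))) :
    (j : ℕ) → EuclideanSpace ℝ (Fin (L j))
  | 0 => σa
  | (j+1) => φ (j+1) (dnnPhi L V σa φ j)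

/-- The right-to-left ordered product `∏↶_{l=j+1}^{w} Vₗᵀ φ'ₗ(Φₗ₋₁)`, as a continuous linear
map `ℝ^{L_{j+1}} → ℝ^{L_{w+1}}`; it is the identity when `w = j` (and junk for `w < j`). -/
noncomputable def ordProd (L : ℕ → ℕ)
    (V : (j : ℕ) → Matrix (Fin (L j)) (Fin (L (j+1))) ℝ)
    (σa : EuclideanSpace ℝ (Fin (L 0)))
    (φ : (j : ℕ) → EuclideanSpace ℝ (Fin (L j)) → EuclideanSpace ℝ (Fin (L j)))
    (j : ℕ) :
    (w : ℕ) → (EuclideanSpace ℝ (Fin (L (j+1))) →L[ℝ] EuclideanSpace ℝ (Fin (L (w+1))))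
  | 0 => if h : j = 0 then by subst h; exact ContinuousLinearMap.id ℝ _ else 0
  | (w+1) =>
      if h : j = w + 1 then by subst h; exact ContinuousLinearMap.id ℝ _
      else ((matCLM (V (w+1))).comp
              (fderiv ℝ (φ (w+1)) (dnnPhi L V σa φ w))).comp (ordProd L V σa φ j w)

lemma dnnPhi_update_of_lt (L : ℕ → ℕ)
    (V : (j : ℕ) → Matrix (Fin (L j)) (Fin (L (j+1))) ℝ)
    (σa : EuclideanSpace ℝ (Fin (L 0)))
    (φ : (j : ℕ) → EuclideanSpace ℝ (Fin (L j)) → EuclideanSpace ℝ (Fin (L j)))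
    (j : ℕ) (X : Matrix (Fin (L j)) (Fin (L (j+1))) ℝ) :
    ∀ w, w < j → dnnPhi L (Function.update V j X) σa φ w = dnnPhi L V σa φ w := by
  intro w
  induction w with
  | zero => intro h; simp [dnnPhi, Function.update_of_ne (by omega : (0:ℕ) ≠ j)]
  | succ w ih =>
      intro h
      simp [dnnPhi, Function.update_of_ne (by omega : w+1 ≠ j), ih (by omega)]

lemma dnnPhi_update_self (L : ℕ → ℕ)
    (V : (j : ℕ) → Matrix (Fin (L j)) (Fin (L (j+1))) ℝ)
    (σa : EuclideanSpace ℝ (Fin (L 0)))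
    (φ : (j : ℕ) → EuclideanSpace ℝ (Fin (L j)) → EuclideanSpace ℝ (Fin (L j)))
    (j : ℕ) (X : Matrix (Fin (L j)) (Fin (L (j+1))) ℝ) :
    dnnPhi L (Function.update V j X) σa φ j = matCLM X (phiVec L V σa φ j) := by
  cases j with
  | zero => simp [dnnPhi, phiVec]
  | succ m =>
      simp [dnnPhi, phiVec, dnnPhi_update_of_lt L V σa φ (m+1) X m (by omega)]

/-- The map `X ↦ Xᵀ v` as a continuous linear map in the matrix `X`. -/
noncomputable def evalCLM {a b : ℕ} (v : EuclideanSpace ℝ (Fin a)) :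
    Matrix (Fin a) (Fin b) ℝ →L[ℝ] EuclideanSpace ℝ (Fin b) :=
  LinearMap.toContinuousLinearMap
  { toFun := fun X => matCLM X v
    map_add' := by intro X Y; simp [matCLM, Matrix.transpose_add, map_add]
    map_smul' := by intro c X; simp [matCLM, Matrix.transpose_smul, map_smul] }

lemma evalCLM_apply {a b : ℕ} (v : EuclideanSpace ℝ (Fin a))
    (X : Matrix (Fin a) (Fin b) ℝ) : evalCLM v X = matCLM X v := rfl

lemma ordProd_self (L : ℕ → ℕ)
    (V : (j : ℕ) → Matrix (Fin (L j)) (Fin (L (j+1))) ℝ)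
    (σa : EuclideanSpace ℝ (Fin (L 0)))
    (φ : (j : ℕ) → EuclideanSpace ℝ (Fin (L j)) → EuclideanSpace ℝ (Fin (L j)))
    (j : ℕ) : ordProd L V σa φ j j = ContinuousLinearMap.id ℝ _ := by
  cases j <;> simp [ordProd]

/-- Regarding `Φ_w` as a function of the single weight matrix `V_j`
(all other weights and `σₐ` fixed): for `j ≤ w ≤ k` its Fréchet derivative at `V j`
applied to a direction `H` equals `(∏↶_{l=j+1}^{w} Vₗᵀ φ'ₗ(Φₗ₋₁)) (Hᵀ φⱼ)`;
for `j > w` the derivative is the zero map. -/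
theorem dnn_layer_hasFDerivAt_single_weight
    (k : ℕ) (hk : 1 ≤ k) (L : ℕ → ℕ)
    (V : (j : ℕ) → Matrix (Fin (L j)) (Fin (L (j+1))) ℝ)
    (σa : EuclideanSpace ℝ (Fin (L 0)))
    (φ : (j : ℕ) → EuclideanSpace ℝ (Fin (L j)) → EuclideanSpace ℝ (Fin (L j)))
    (hφdiff : ∀ l, 1 ≤ l → l ≤ k → Differentiable ℝ (φ l)) :
    (∀ j w, j ≤ w → w ≤ k →
      ∃ D : Matrix (Fin (L j)) (Fin (L (j+1))) ℝ →L[ℝ] EuclideanSpace ℝ (Fin (L (w+1))),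
        HasFDerivAt (fun X => dnnPhi L (Function.update V j X) σa φ w) D (V j) ∧
        ∀ H, D H = ordProd L V σa φ j w (matCLM H (phiVec L V σa φ j))) ∧
    (∀ j w, w < j → w ≤ k →
      HasFDerivAt (fun X : Matrix (Fin (L j)) (Fin (L (j+1))) ℝ =>
        dnnPhi L (Function.update V j X) σa φ w)
        (0 : Matrix (Fin (L j)) (Fin (L (j+1))) ℝ →L[ℝ] EuclideanSpace ℝ (Fin (L (w+1)))) (V j)) := by
  
  constructor
  · intro j w hjw hwk
    induction w with
    | zero =>
        have hj0 : j = 0 := Nat.le_zero.mp hjw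
        subst hj0
        refine ⟨evalCLM (phiVec L V σa φ 0), ?_, ?_⟩
        · have he : (fun X => dnnPhi L (Function.update V 0 X) σa φ 0)
              = fun X : Matrix (Fin (L 0)) (Fin (L 1)) ℝ => evalCLM (phiVec L V σa φ 0) X := by
            funext X
            rw [evalCLM_apply, dnnPhi_update_self]
          rw [he]
          exact (evalCLM (phiVec L V σa φ 0)).hasFDerivAt
        · intro H
          rw [ordProd_self]
          rfl
    | succ w ih =>
        rcases Nat.lt_or_ge j (w+1) with hlt | hge
        · have hjw' : j ≤ w := by omega
          obtain ⟨Dw, hDw, hDwH⟩ := ih hjw' (by omega)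
          have hupd : Function.update V j (V j) = V := Function.update_eq_self _ _
          have hφ : HasFDerivAt (φ (w+1))
              (fderiv ℝ (φ (w+1)) (dnnPhi L V σa φ w))
              (dnnPhi L (Function.update V j (V j)) σa φ w) := by
            rw [hupd]
            exact ((hφdiff (w+1) (by omega) hwk) _).hasFDerivAt
          have hA := (matCLM (V (w+1))).hasFDerivAt
            (x := φ (w+1) (dnnPhi L (Function.update V j (V j)) σa φ w))
          have hcomp := (hA.comp (V j) (hφ.comp (V j) hDw))
          refine ⟨(matCLM (V (w+1))).comp
              ((fderiv ℝ (φ (w+1)) (dnnPhi L V σa φ w)).comp Dw), ?_, ?_⟩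
          · have he : (fun X => dnnPhi L (Function.update V j X) σa φ (w+1))
                = fun X => matCLM (V (w+1)) (φ (w+1) (dnnPhi L (Function.update V j X) σa φ w)) := by
              funext X
              simp [dnnPhi, Function.update_of_ne (by omega : w+1 ≠ j)]
            rw [he]
            exact hcomp
          · intro H
            have hord : ordProd L V σa φ j (w+1)
                = ((matCLM (V (w+1))).comp
                    (fderiv ℝ (φ (w+1)) (dnnPhi L V σa φ w))).comp (ordProd L V σa φ j w) := by
              rw [ordProd, dif_neg (by omega : ¬ j = w+1)]
            rw [hord]
            simp only [ContinuousLinearMap.coe_comp', Function.comp_apply]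
            rw [← hDwH H]
        · have hj : j = w + 1 := by omega
          subst hj
          refine ⟨evalCLM (phiVec L V σa φ (w+1)), ?_, ?_⟩
          · have he : (fun X => dnnPhi L (Function.update V (w+1) X) σa φ (w+1))
                = fun X : Matrix (Fin (L (w+1))) (Fin (L (w+2))) ℝ =>
                    evalCLM (phiVec L V σa φ (w+1)) X := by
              funext X
              rw [evalCLM_apply, dnnPhi_update_self]
            rw [he]
            exact (evalCLM (phiVec L V σa φ (w+1))).hasFDerivAt
          · intro H
            rw [ordProd_self]
            rfl
  · intro j w hwj hwk
    have he : (fun X : Matrix (Fin (L j)) (Fin (L (j+1))) ℝ =>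
        dnnPhi L (Function.update V j X) σa φ w) = fun _ => dnnPhi L V σa φ w := by
      funext X
      exact dnnPhi_update_of_lt L V σa φ j X w hwj
    rw [he]
    exact hasFDerivAt_const _ _
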